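/- arXiv:1508.02325 — 2 statements merged into one kernel-verified Lean document; each statement's English description precedes it below -/
import Mathlib

section
/- For s > 1 and τ ≥ 0, the integral ∫₀^τ 2·(1+t²)^(−s/2)·Γ(s)·sin(s·arctan t) dt equals (2Γ(s)/(s−1))·(1 − (τ²+1)^(−s/2)·(τ·sin(s·arctan τ) + cos(s·arctan τ))). -/
theorem dephasing_factor_integral (s τ : ℝ) (hs : 1 < s) (hτ : 0 ≤ τ) :
    ∫ t in (0:ℝ)..τ, 2 * (1 + t^2) ^ (-(s/2)) * Real.Gamma s * Real.sin (s * Real.arctan t)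
      = (2 * Real.Gamma s / (s - 1)) *
        (1 - (τ^2 + 1) ^ (-(s/2)) *
          (τ * Real.sin (s * Real.arctan τ) + Real.cos (s * Real.arctan τ))) := by
  have hs1 : s - 1 ≠ 0 := sub_ne_zero.mpr (ne_of_gt hs)
  set F : ℝ → ℝ := fun u => (2 * Real.Gamma s / (s - 1)) *
        (1 - (u^2 + 1) ^ (-(s/2)) *
          (u * Real.sin (s * Real.arctan u) + Real.cos (s * Real.arctan u))) with hF
  have key : ∀ t : ℝ, HasDerivAt F
      (2 * (1 + t^2) ^ (-(s/2)) * Real.Gamma s * Real.sin (s * Real.arctan t)) t := by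
    intro t
    have hc : (0:ℝ) < t^2 + 1 := by positivity
    have h1 : HasDerivAt (fun u : ℝ => u^2 + 1) (2*t) t := by
      simpa using (hasDerivAt_pow 2 t).add_const 1
    have h2 : HasDerivAt (fun u : ℝ => (u^2+1) ^ (-(s/2)))
        ((2*t) * (-(s/2)) * (t^2+1) ^ (-(s/2) - 1)) t :=
      h1.rpow_const (Or.inl hc.ne')
    have ha : HasDerivAt (fun u : ℝ => s * Real.arctan u) (s * (1/(1+t^2))) t :=
      (Real.hasDerivAt_arctan t).const_mul s
    have hsin : HasDerivAt (fun u : ℝ => Real.sin (s * Real.arctan u))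
        (Real.cos (s * Real.arctan t) * (s * (1/(1+t^2)))) t := ha.sin
    have hcos : HasDerivAt (fun u : ℝ => Real.cos (s * Real.arctan u))
        (-Real.sin (s * Real.arctan t) * (s * (1/(1+t^2)))) t := ha.cos
    have hmul : HasDerivAt (fun u : ℝ => u * Real.sin (s * Real.arctan u))
        (1 * Real.sin (s * Real.arctan t) +
          t * (Real.cos (s * Real.arctan t) * (s * (1/(1+t^2))))) t :=
      (hasDerivAt_id t).mul hsin
    have hsum := hmul.add hcos
    have hprod := h2.mul hsum
    have hfull := (hprod.const_sub 1).const_mul (2 * Real.Gamma s / (s - 1))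
    convert hfull using 1
    case e'_4 => rfl
    case e'_5 => rfl
    case e'_8 => rfl
    have hpow : (t^2+1) ^ (-(s/2) - 1) = (t^2+1) ^ (-(s/2)) / (t^2+1) :=
      Real.rpow_sub_one hc.ne' _
    have h12 : (1 + t^2 : ℝ) ^ (-(s/2)) = (t^2 + 1) ^ (-(s/2)) := by ring_nf
    rw [hpow, h12, Pi.add_apply]
    have hc' : (1 + t^2 : ℝ) ≠ 0 := by positivity
    field_simp
    ring
  have hcont : Continuous fun t : ℝ =>
      2 * (1 + t^2) ^ (-(s/2)) * Real.Gamma s * Real.sin (s * Real.arctan t) := by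
    have h1 : Continuous fun t : ℝ => (1 + t^2) ^ (-(s/2)) := by
      apply Continuous.rpow_const (by continuity)
      intro x; left; positivity
    exact ((continuous_const.mul h1).mul continuous_const).mul
      (Real.continuous_sin.comp (continuous_const.mul Real.continuous_arctan))
  have := intervalIntegral.integral_eq_sub_of_hasDerivAt
    (f := F) (a := (0:ℝ)) (b := τ) (fun t _ => key t)
    (hcont.intervalIntegrable 0 τ)
  rw [this, hF]
  simp [Real.arctan_zero]
end

section
/- The function Λ∞(s) = 2Γ(s)/(s−1) on (1, ∞) attains a minimum at some s̄ ∈ (2,3); in particular Λ∞ is strictly decreasing on (1, 2] and strictly increasing on [3, ∞). -/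
open Real Set

/-- Mirror of `ConvexOn.strict_mono_of_lt`. -/
lemma ConvexOn.strict_anti_of_lt' {s : Set ℝ} {f : ℝ → ℝ} (hf : ConvexOn ℝ s f) {x y : ℝ}
    (hy : y ∈ s) (hxy : x < y) (hxy' : f y < f x) : StrictAntiOn f (s ∩ Set.Iic x) := by
  intro u hu v hv huv
  have step1 : ∀ {z : ℝ}, z ∈ s ∩ Set.Iio x → f x < f z := by
    intro z hz
    refine hf.lt_left_of_right_lt hz.1 hy ?_ hxy'
    rw [openSegment_eq_Ioo (hz.2.trans hxy)]
    exact ⟨hz.2, hxy⟩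
  have hvx : v ≤ x := hv.2
  rcases eq_or_lt_of_le hvx with (rfl | hv2)
  · exact step1 ⟨hu.1, huv⟩
  · have hxs : x ∈ s := by
      apply hf.1.segment_subset hu.1 hy
      rw [segment_eq_Icc (le_of_lt (lt_trans (huv.trans hv2) hxy))]
      exact ⟨(huv.trans hv2).le, hxy.le⟩
    refine hf.lt_left_of_right_lt hu.1 hxs ?_ (step1 ⟨hv.1, hv2⟩)
    rw [openSegment_eq_Ioo (huv.trans hv2)]
    exact ⟨huv, hv2⟩

lemma gamma_strictAntiOn : StrictAntiOn Real.Gamma (Set.Ioc (0:ℝ) 1) := by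
  have h := Real.convexOn_Gamma.strict_anti_of_lt' (x := 1) (y := 3/2)
    (by norm_num : (3/2:ℝ) ∈ Set.Ioi 0) (by norm_num)
    (by rw [Real.Gamma_one]; exact Real.Gamma_three_div_two_lt_one)
  intro a ha b hb hab
  exact h ⟨ha.1, ha.2⟩ ⟨hb.1, hb.2⟩ hab

theorem asymptotic_dephasing_min :
    (∃ sbar ∈ Set.Ioo (2:ℝ) 3,
      ∀ s ∈ Set.Ioi (1:ℝ),
        2 * Real.Gamma sbar / (sbar - 1) ≤ 2 * Real.Gamma s / (s - 1)) ∧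
    StrictAntiOn (fun s : ℝ => 2 * Real.Gamma s / (s - 1)) (Set.Ioc (1:ℝ) 2) ∧
    StrictMonoOn (fun s : ℝ => 2 * Real.Gamma s / (s - 1)) (Set.Ici (3:ℝ)) := by
  have key : ∀ s : ℝ, 1 < s → 2 * Real.Gamma s / (s - 1) = 2 * Real.Gamma (s - 1) := by
    intro s hs
    have hne : s - 1 ≠ 0 := by linarith
    have : Real.Gamma s = (s - 1) * Real.Gamma (s - 1) := by
      rw [← Real.Gamma_add_one hne]; ring_nf
    rw [this]; field_simp
  -- continuity of Gamma on [1,2]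
  have hcont : ContinuousOn Real.Gamma (Set.Icc (1:ℝ) 2) := by
    intro z hz
    have : DifferentiableAt ℝ Real.Gamma z := by
      apply Real.differentiableAt_Gamma
      intro m
      have : (0:ℝ) < z := lt_of_lt_of_le one_pos hz.1
      intro h; rw [h] at this
      have : (0:ℝ) ≤ (m:ℝ) := Nat.cast_nonneg m
      linarith
    exact this.continuousAt.continuousWithinAt
  obtain ⟨c, hc, hcmin⟩ := (isCompact_Icc (a := (1:ℝ)) (b := 2)).exists_isMinOn
    (Set.nonempty_Icc.2 (by norm_num)) hcont
  have hc32 : Real.Gamma c ≤ Real.Gamma (3/2) := hcmin (by norm_num)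
  have hclt1 : Real.Gamma c < 1 := lt_of_le_of_lt hc32 Real.Gamma_three_div_two_lt_one
  have hc1 : 1 < c := by
    rcases lt_or_eq_of_le hc.1 with h | h
    · exact h
    · exfalso; rw [← h, Real.Gamma_one] at hclt1; linarith
  have hc2 : c < 2 := by
    rcases lt_or_eq_of_le hc.2 with h | h
    · exact h
    · exfalso; rw [h, Real.Gamma_two] at hclt1; linarith
  -- min of Gamma over all of (0, ∞)
  have hmin : ∀ t : ℝ, 0 < t → Real.Gamma c ≤ Real.Gamma t := by
    intro t ht
    rcases le_or_gt t 1 with h1 | h1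
    · rcases lt_or_eq_of_le h1 with h | h
      · have : Real.Gamma 1 < Real.Gamma t :=
          gamma_strictAntiOn ⟨ht, h1⟩ ⟨one_pos, le_refl 1⟩ h
        rw [Real.Gamma_one] at this; linarith
      · rw [h, Real.Gamma_one]; linarith
    rcases le_or_gt t 2 with h2 | h2
    · exact hcmin ⟨h1.le, h2⟩
    · have : Real.Gamma 2 < Real.Gamma t :=
        Real.Gamma_strictMonoOn_Ici (Set.mem_Ici.mpr (le_refl 2)) (Set.mem_Ici.mpr h2.le) h2
      rw [Real.Gamma_two] at this; linarith
  refine ⟨⟨c + 1, ⟨by linarith, by linarith⟩, ?_⟩, ?_, ?_⟩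
  · intro s hs
    rw [key (c+1) (by linarith), key s hs]
    simp only [add_sub_cancel_right]
    have := hmin (s - 1) (by simpa using hs)
    linarith
  · intro a ha b hb hab
    show 2 * Real.Gamma b / (b - 1) < 2 * Real.Gamma a / (a - 1)
    rw [key a ha.1, key b hb.1]
    have : Real.Gamma (b - 1) < Real.Gamma (a - 1) :=
      gamma_strictAntiOn ⟨by linarith [ha.1], by linarith [ha.2]⟩
        ⟨by linarith [hb.1], by linarith [hb.2]⟩ (by linarith)
    linarith
  · intro a ha b hb hab
    show 2 * Real.Gamma a / (a - 1) < 2 * Real.Gamma b / (b - 1)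
    rw [key a (by linarith [mem_Ici.mp ha]), key b (by linarith [mem_Ici.mp hb])]
    have : Real.Gamma (a - 1) < Real.Gamma (b - 1) :=
      Real.Gamma_strictMonoOn_Ici (by simp at ha ⊢; linarith)
        (by simp at hb ⊢; linarith) (by linarith)
    linarith
end
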